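/- arXiv:2111.03158 — 10 statements merged into one kernel-verified Lean document; each statement's English description precedes it below -/
import Mathlib

section
/- There exists a universal constant K > 0 such that the following holds (relative flatness of regular distributions). Let F : [0,1] → [0,1] be a continuous, strictly increasing function with F(0) = 0 and F(1) = 1, let F⁻¹ denote its inverse, and suppose the quantile-space revenue curve R̂(q) = q · F⁻¹(1 − q) is concave on [0,1] (i.e., the distribution with cdf F is regular). Define Rev(p) = p · (1 − F(p)). Let 0 < p₁ < p₄ ≤ 1, set c = p₄/p₁, p₂ = (2p₁ + p₄)/3, p₃ = (p₁ + 2p₄)/3, and let Rev_max and Rev_min denote the maximum and minimum of Rev over the four points {p₁, p₂, p₃, p₄}. If Rev_min ≥ Rev_max − ε for some ε > 0, then for every p ∈ [p₁, p₄] one has Rev(p) ≤ Rev_max + K · c · ε. -/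
open Set

private lemma concave_ext_right {g : ℝ → ℝ} (hg : ConcaveOn ℝ (Icc 0 1) g) {a b x : ℝ}
    (ha : a ∈ Icc (0:ℝ) 1) (hx : x ∈ Icc (0:ℝ) 1) (hab : a < b) (hbx : b ≤ x) :
    g x ≤ g b + (x - b) * (g b - g a) / (b - a) := by
  rcases eq_or_lt_of_le hbx with rfl | hbx
  · simp
  · have h := hg.slope_anti_adjacent ha hx hab hbx
    rw [div_le_div_iff₀ (by linarith) (by linarith)] at h
    have h2 : g x - g b ≤ (x - b) * (g b - g a) / (b - a) := by
      rw [le_div_iff₀ (by linarith)]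
      nlinarith
    linarith

private lemma concave_ext_left {g : ℝ → ℝ} (hg : ConcaveOn ℝ (Icc 0 1) g) {x b cc : ℝ}
    (hx : x ∈ Icc (0:ℝ) 1) (hc : cc ∈ Icc (0:ℝ) 1) (hbc : b < cc) (hxb : x ≤ b) :
    g x ≤ g b + (b - x) * (g b - g cc) / (cc - b) := by
  rcases eq_or_lt_of_le hxb with rfl | hxb
  · simp
  · have h := hg.slope_anti_adjacent hx hc hxb hbc
    rw [div_le_div_iff₀ (by linarith) (by linarith)] at h
    have h2 : g x - g b ≤ (b - x) * (g b - g cc) / (cc - b) := by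
      rw [le_div_iff₀ (by linarith)]
      nlinarith
    linarith

set_option maxHeartbeats 1600000 in
/-- Relative flatness of regular distributions: there is a universal constant `K > 0` such
that for any regular distribution (cdf `F` continuous, strictly increasing on `[0,1]` with
`F 0 = 0`, `F 1 = 1`, inverse `Finv`, and concave quantile-space revenue curve), if the
revenue curve is `ε`-flat at four equidistant points `p₁ < p₂ < p₃ < p₄ = c·p₁`, then the
revenue anywhere in `[p₁, p₄]` is at most `Rev_max + K·c·ε`. -/
theorem relative_flatness_of_regular :
    ∃ K : ℝ, 0 < K ∧
      ∀ (F Finv : ℝ → ℝ),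
        ContinuousOn F (Icc 0 1) →
        StrictMonoOn F (Icc 0 1) →
        F 0 = 0 → F 1 = 1 →
        (∀ p ∈ Icc (0:ℝ) 1, Finv (F p) = p) →
        (∀ q ∈ Icc (0:ℝ) 1, F (Finv q) = q) →
        ConcaveOn ℝ (Icc 0 1) (fun q => q * Finv (1 - q)) →
        ∀ ε : ℝ, 0 < ε →
        ∀ p₁ p₄ : ℝ, 0 < p₁ → p₁ < p₄ → p₄ ≤ 1 →
        ∀ c p₂ p₃ : ℝ, c = p₄ / p₁ → p₂ = (2 * p₁ + p₄) / 3 → p₃ = (p₁ + 2 * p₄) / 3 →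
        ∀ Rev : ℝ → ℝ, (∀ p, Rev p = p * (1 - F p)) →
        ∀ Rmax Rmin : ℝ,
          Rmax = max (max (Rev p₁) (Rev p₂)) (max (Rev p₃) (Rev p₄)) →
          Rmin = min (min (Rev p₁) (Rev p₂)) (min (Rev p₃) (Rev p₄)) →
          Rmin ≥ Rmax - ε →
          ∀ p ∈ Icc p₁ p₄, Rev p ≤ Rmax + K * c * ε := by
  refine ⟨6, by norm_num, ?_⟩
  intro F Finv hFc hFmono hF0 hF1 hFinvF hFFinv hconc ε hε p₁ p₄ hp₁ hp14 hp41 c p₂ p₃ hc hp2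
    hp3 Rev hRev Rmax Rmin hRmax hRmin hflat p hp
  have hp1lt1 : p₁ < 1 := lt_of_lt_of_le hp14 hp41
  have hp12 : p₁ < p₂ := by rw [hp2]; linarith
  have hp23 : p₂ < p₃ := by rw [hp2, hp3]; linarith
  have hp34 : p₃ < p₄ := by rw [hp3]; linarith
  have hp2pos : 0 < p₂ := lt_trans hp₁ hp12
  have hp3pos : 0 < p₃ := lt_trans hp2pos hp23
  have hp4pos : 0 < p₄ := lt_trans hp3pos hp34
  have hp4c : p₄ = c * p₁ := by rw [hc]; field_simp
  have hc1 : 1 < c := by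
    rw [hc, lt_div_iff₀ hp₁]; linarith
  have mem : ∀ x : ℝ, p₁ ≤ x → x ≤ p₄ → x ∈ Icc (0:ℝ) 1 := fun x h1 h2 =>
    ⟨by linarith, by linarith⟩
  have hm1 := mem p₁ le_rfl hp14.le
  have hm2 := mem p₂ hp12.le (by linarith)
  have hm3 := mem p₃ (by linarith) hp34.le
  have hm4 := mem p₄ hp14.le le_rfl
  have hmp := mem p hp.1 hp.2
  have hFrange : ∀ x ∈ Icc (0:ℝ) 1, F x ∈ Icc (0:ℝ) 1 := by
    intro x hx
    constructor
    · rw [← hF0]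
      exact hFmono.monotoneOn ⟨le_rfl, zero_le_one⟩ hx hx.1
    · rw [← hF1]
      exact hFmono.monotoneOn hx ⟨zero_le_one, le_rfl⟩ hx.2
  have hgRev : ∀ x ∈ Icc (0:ℝ) 1, (fun q => q * Finv (1 - q)) (1 - F x) = Rev x := by
    intro x hx
    have h1 : (1:ℝ) - (1 - F x) = F x := by ring
    show (1 - F x) * Finv (1 - (1 - F x)) = Rev x
    rw [h1, hFinvF x hx, hRev]; ring
  set g : ℝ → ℝ := fun q => q * Finv (1 - q) with hgdef
  set q₁ : ℝ := 1 - F p₁ with hq1def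
  set q₂ : ℝ := 1 - F p₂ with hq2def
  set q₃ : ℝ := 1 - F p₃ with hq3def
  set q₄ : ℝ := 1 - F p₄ with hq4def
  set q : ℝ := 1 - F p with hqdef
  have hqm : ∀ x ∈ Icc (0:ℝ) 1, (1 - F x) ∈ Icc (0:ℝ) 1 := by
    intro x hx
    have := hFrange x hx
    exact ⟨by linarith [this.2], by linarith [this.1]⟩
  have hqm1 : q₁ ∈ Icc (0:ℝ) 1 := by rw [hq1def]; exact hqm p₁ hm1
  have hqm2 : q₂ ∈ Icc (0:ℝ) 1 := by rw [hq2def]; exact hqm p₂ hm2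
  have hqm3 : q₃ ∈ Icc (0:ℝ) 1 := by rw [hq3def]; exact hqm p₃ hm3
  have hqm4 : q₄ ∈ Icc (0:ℝ) 1 := by rw [hq4def]; exact hqm p₄ hm4
  have hqmp : q ∈ Icc (0:ℝ) 1 := by rw [hqdef]; exact hqm p hmp
  -- orderings of quantiles
  have hq12 : q₂ < q₁ := by
    have := hFmono hm1 hm2 hp12; simp only [hq1def, hq2def]; linarith
  have hq34 : q₄ < q₃ := by
    have := hFmono hm3 hm4 hp34; simp only [hq3def, hq4def]; linarith
  have hqq1 : q ≤ q₁ := by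
    have := hFmono.monotoneOn hm1 hmp hp.1; simp only [hq1def, hqdef]; linarith
  have hqq4 : q₄ ≤ q := by
    have := hFmono.monotoneOn hmp hm4 hp.2; simp only [hq4def, hqdef]; linarith
  -- revenue values
  have hr1 : Rev p₁ = p₁ * q₁ := by rw [hRev, hq1def]
  have hr2 : Rev p₂ = p₂ * q₂ := by rw [hRev, hq2def]
  have hr3 : Rev p₃ = p₃ * q₃ := by rw [hRev, hq3def]
  have hg1 : g q₁ = Rev p₁ := by rw [hq1def]; exact hgRev p₁ hm1
  have hg2 : g q₂ = Rev p₂ := by rw [hq2def]; exact hgRev p₂ hm2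
  have hg3 : g q₃ = Rev p₃ := by rw [hq3def]; exact hgRev p₃ hm3
  have hgp : g q = Rev p := by rw [hqdef]; exact hgRev p hmp
  have hr4 : Rev p₄ = p₄ * q₄ := by rw [hRev, hq4def]
  clear_value g q₁ q₂ q₃ q₄ q
  have hub1 : Rev p₁ ≤ Rmax := by rw [hRmax]; exact le_max_of_le_left (le_max_left _ _)
  have hub2 : Rev p₂ ≤ Rmax := by rw [hRmax]; exact le_max_of_le_left (le_max_right _ _)
  have hub3 : Rev p₃ ≤ Rmax := by rw [hRmax]; exact le_max_of_le_right (le_max_left _ _)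
  have hub4 : Rev p₄ ≤ Rmax := by rw [hRmax]; exact le_max_of_le_right (le_max_right _ _)
  have hlb1 : Rmax - ε ≤ Rev p₁ := by
    refine le_trans hflat ?_
    rw [hRmin]; exact min_le_of_left_le (min_le_left _ _)
  have hlb2 : Rmax - ε ≤ Rev p₂ := by
    refine le_trans hflat ?_
    rw [hRmin]; exact min_le_of_left_le (min_le_right _ _)
  have hlb3 : Rmax - ε ≤ Rev p₃ := by
    refine le_trans hflat ?_
    rw [hRmin]; exact min_le_of_right_le (min_le_left _ _)
  have hlb4 : Rmax - ε ≤ Rev p₄ := by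
    refine le_trans hflat ?_
    rw [hRmin]; exact min_le_of_right_le (min_le_right _ _)
  set d : ℝ := (p₄ - p₁) / 3 with hddef
  have hd21 : p₂ - p₁ = d := by rw [hp2, hddef]; ring
  have hd32 : p₃ - p₂ = d := by rw [hp2, hp3, hddef]; ring
  have hd43 : p₄ - p₃ = d := by rw [hp3, hddef]; ring
  have hd0 : 0 < d := by rw [hddef]; linarith
  clear_value d
  have hM0 : 0 < Rmax := by
    have hFp1 : F p₁ < 1 := by
      rw [← hF1]; exact hFmono hm1 ⟨zero_le_one, le_rfl⟩ hp1lt1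
    have : 0 < Rev p₁ := by rw [hRev]; exact mul_pos hp₁ (by linarith)
    linarith
  have hcε : 0 ≤ c * ε := (mul_pos (by linarith : (0:ℝ) < c) hε).le
  -- upper bound Rev p ≤ c * Rmax (used in case B)
  have hRevub : Rev p ≤ c * Rmax := by
    have hFmono1 : F p₁ ≤ F p := hFmono.monotoneOn hm1 hmp hp.1
    have hFp1' : F p ≤ 1 := (hFrange p hmp).2
    have h1 : Rev p ≤ p₄ * q₁ := by
      rw [hRev, hq1def]
      have e1 : p * (1 - F p) ≤ p₄ * (1 - F p) :=
        mul_le_mul_of_nonneg_right hp.2 (by linarith)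
      have e2 : p₄ * (1 - F p) ≤ p₄ * (1 - F p₁) :=
        mul_le_mul_of_nonneg_left (by linarith) hp4pos.le
      linarith
    have h2 : p₄ * q₁ = c * (p₁ * q₁) := by rw [hp4c]; ring
    have h3 : c * (p₁ * q₁) ≤ c * Rmax := by
      have : p₁ * q₁ ≤ Rmax := by linarith [hub1, hr1]
      exact mul_le_mul_of_nonneg_left this (by linarith)
    linarith
  by_cases hcase : 2 * ε * p₃ ≤ Rmax * d
  · -- small ε case
    -- gap bounds
    have hG23 : Rmax * d / 2 ≤ p₂ * p₃ * (q₂ - q₃) := by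
      have a1 : p₃ * (Rmax - ε) ≤ p₃ * Rev p₂ := mul_le_mul_of_nonneg_left hlb2 hp3pos.le
      have a2 : p₂ * Rev p₃ ≤ p₂ * Rmax := mul_le_mul_of_nonneg_left hub3 hp2pos.le
      have a3 : p₂ * p₃ * (q₂ - q₃) = p₃ * (p₂ * q₂) - p₂ * (p₃ * q₃) := by ring
      have a4 : ε * p₃ ≤ Rmax * d / 2 := by linarith [hcase]
      rw [hr2] at a1; rw [hr3] at a2
      have a5 : Rmax * p₃ - Rmax * p₂ = Rmax * d := by rw [← hd32]; ring
      linarith [a1, a2, a3, a4, a5]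
    have hq23 : q₃ < q₂ := by
      by_contra hcon
      push_neg at hcon
      have : p₂ * p₃ * (q₂ - q₃) ≤ 0 :=
        mul_nonpos_of_nonneg_of_nonpos (mul_pos hp2pos hp3pos).le (by linarith)
      linarith [hG23, mul_pos hM0 hd0]
    have hG12up : p₁ * p₂ * (q₁ - q₂) ≤ 3 / 2 * (Rmax * d) := by
      have a1 : p₂ * Rev p₁ ≤ p₂ * Rmax := mul_le_mul_of_nonneg_left hub1 hp2pos.le
      have a2 : p₁ * (Rmax - ε) ≤ p₁ * Rev p₂ := mul_le_mul_of_nonneg_left hlb2 hp₁.le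
      have a3 : p₁ * p₂ * (q₁ - q₂) = p₂ * (p₁ * q₁) - p₁ * (p₂ * q₂) := by ring
      have a4 : ε * p₁ ≤ Rmax * d / 2 := by
        have : ε * p₁ ≤ ε * p₃ := mul_le_mul_of_nonneg_left (by linarith) hε.le
        linarith [hcase]
      rw [hr1] at a1; rw [hr2] at a2
      have a5 : Rmax * p₂ - Rmax * p₁ = Rmax * d := by rw [← hd21]; ring
      linarith [a1, a2, a3, a4, a5]
    have hG12lo : Rmax * d / 2 ≤ p₁ * p₂ * (q₁ - q₂) := by
      have a1 : p₂ * (Rmax - ε) ≤ p₂ * Rev p₁ := mul_le_mul_of_nonneg_left hlb1 hp2pos.le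
      have a2 : p₁ * Rev p₂ ≤ p₁ * Rmax := mul_le_mul_of_nonneg_left hub2 hp₁.le
      have a3 : p₁ * p₂ * (q₁ - q₂) = p₂ * (p₁ * q₁) - p₁ * (p₂ * q₂) := by ring
      have a4 : ε * p₂ ≤ Rmax * d / 2 := by
        have : ε * p₂ ≤ ε * p₃ := mul_le_mul_of_nonneg_left (by linarith) hε.le
        linarith [hcase]
      rw [hr1] at a1; rw [hr2] at a2
      have a5 : Rmax * p₂ - Rmax * p₁ = Rmax * d := by rw [← hd21]; ring
      linarith [a1, a2, a3, a4, a5]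
    have hG34up : p₃ * p₄ * (q₃ - q₄) ≤ 3 / 2 * (Rmax * d) := by
      have a1 : p₄ * Rev p₃ ≤ p₄ * Rmax := mul_le_mul_of_nonneg_left hub3 hp4pos.le
      have a2 : p₃ * (Rmax - ε) ≤ p₃ * Rev p₄ := mul_le_mul_of_nonneg_left hlb4 hp3pos.le
      have a3 : p₃ * p₄ * (q₃ - q₄) = p₄ * (p₃ * q₃) - p₃ * (p₄ * q₄) := by ring
      have a4 : ε * p₃ ≤ Rmax * d / 2 := by linarith [hcase]
      rw [hr3] at a1; rw [hr4] at a2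
      have a5 : Rmax * p₄ - Rmax * p₃ = Rmax * d := by rw [← hd43]; ring
      linarith [a1, a2, a3, a4, a5]
    -- gap ratio bounds
    have K12 : q₁ - q₂ ≤ 3 * c * (q₂ - q₃) := by
      have h1 : p₁ * p₂ * (q₁ - q₂) * p₃ ≤ 3 / 2 * (Rmax * d) * p₃ :=
        mul_le_mul_of_nonneg_right hG12up hp3pos.le
      have h2 : 3 * p₄ * (Rmax * d / 2) ≤ 3 * p₄ * (p₂ * p₃ * (q₂ - q₃)) :=
        mul_le_mul_of_nonneg_left hG23 (by linarith)
      have h4 : Rmax * d * p₃ ≤ Rmax * d * p₄ :=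
        mul_le_mul_of_nonneg_left hp34.le (mul_pos hM0 hd0).le
      have h3 : p₁ * p₂ * p₃ * (q₁ - q₂) ≤ p₁ * p₂ * p₃ * (3 * c * (q₂ - q₃)) := by
        rw [hp4c] at h2 h4; linarith [h1, h2, h4]
      have hpos : 0 < p₁ * p₂ * p₃ := by positivity
      exact le_of_mul_le_mul_left h3 hpos
    have K23 : q₂ - q₃ ≤ 3 * c * (q₁ - q₂) := by
      have hup : p₂ * p₃ * (q₂ - q₃) ≤ 3 / 2 * (Rmax * d) := by
        have a1 : p₃ * Rev p₂ ≤ p₃ * Rmax := mul_le_mul_of_nonneg_left hub2 hp3pos.le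
        have a2 : p₂ * (Rmax - ε) ≤ p₂ * Rev p₃ := mul_le_mul_of_nonneg_left hlb3 hp2pos.le
        have a3 : p₂ * p₃ * (q₂ - q₃) = p₃ * (p₂ * q₂) - p₂ * (p₃ * q₃) := by ring
        have a4 : ε * p₂ ≤ Rmax * d / 2 := by
          have : ε * p₂ ≤ ε * p₃ := mul_le_mul_of_nonneg_left (by linarith) hε.le
          linarith [hcase]
        rw [hr2] at a1; rw [hr3] at a2
        have a5 : Rmax * p₃ - Rmax * p₂ = Rmax * d := by rw [← hd32]; ring
        linarith [a1, a2, a3, a4, a5]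
      have h1 : p₂ * p₃ * (q₂ - q₃) * p₁ ≤ 3 / 2 * (Rmax * d) * p₁ :=
        mul_le_mul_of_nonneg_right hup hp₁.le
      have h2 : 3 * p₃ * (Rmax * d / 2) ≤ 3 * p₃ * (p₁ * p₂ * (q₁ - q₂)) :=
        mul_le_mul_of_nonneg_left hG12lo (by linarith)
      have h5 : Rmax * d * p₁ ≤ Rmax * d * p₃ :=
        mul_le_mul_of_nonneg_left (by linarith) (mul_pos hM0 hd0).le
      have h3 : p₁ * p₂ * p₃ * (q₂ - q₃) ≤ p₁ * p₂ * p₃ * (3 * (q₁ - q₂)) := by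
        linarith [h1, h2, h5]
      have hpos : 0 < p₁ * p₂ * p₃ := by positivity
      have h4 : q₂ - q₃ ≤ 3 * (q₁ - q₂) := le_of_mul_le_mul_left h3 hpos
      have h6 : 3 * (q₁ - q₂) ≤ 3 * c * (q₁ - q₂) :=
        mul_le_mul_of_nonneg_right (by linarith : (3:ℝ) ≤ 3 * c) (by linarith)
      linarith
    have K34 : q₃ - q₄ ≤ 3 * c * (q₂ - q₃) := by
      have h1 : p₃ * p₄ * (q₃ - q₄) * p₂ ≤ 3 / 2 * (Rmax * d) * p₂ :=
        mul_le_mul_of_nonneg_right hG34up hp2pos.le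
      have h2 : 3 * p₄ * (Rmax * d / 2) ≤ 3 * p₄ * (p₂ * p₃ * (q₂ - q₃)) :=
        mul_le_mul_of_nonneg_left hG23 (by linarith)
      have h5 : Rmax * d * p₂ ≤ Rmax * d * p₄ :=
        mul_le_mul_of_nonneg_left (by linarith) (mul_pos hM0 hd0).le
      have h3 : p₂ * p₃ * p₄ * (q₃ - q₄) ≤ p₂ * p₃ * p₄ * (3 * (q₂ - q₃)) := by
        linarith [h1, h2, h5]
      have hpos : 0 < p₂ * p₃ * p₄ := by positivity
      have h4 : q₃ - q₄ ≤ 3 * (q₂ - q₃) := le_of_mul_le_mul_left h3 hpos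
      have h6 : 3 * (q₂ - q₃) ≤ 3 * c * (q₂ - q₃) :=
        mul_le_mul_of_nonneg_right (by linarith : (3:ℝ) ≤ 3 * c) (by linarith)
      linarith
    have key : Rev p ≤ Rmax + 3 * c * ε := by
      rcases le_or_gt p p₂ with hpc | hpc
      · -- p ∈ [p₁, p₂], q ∈ [q₂, q₁]
        have hqq2 : q₂ ≤ q := by
          have := hFmono.monotoneOn hmp hm2 hpc; simp only [hq2def, hqdef]; linarith
        have hext := concave_ext_right hconc hqm3 hqmp hq23 hqq2
        rw [hgp, hg2, hg3] at hext
        have hnum : (q - q₂) * (Rev p₂ - Rev p₃) ≤ 3 * c * ε * (q₂ - q₃) := by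
          have e1 : (q - q₂) * (Rev p₂ - Rev p₃) ≤ (q - q₂) * ε :=
            mul_le_mul_of_nonneg_left (by linarith [hub2, hlb3]) (by linarith)
          have e2 : (q - q₂) * ε ≤ (q₁ - q₂) * ε :=
            mul_le_mul_of_nonneg_right (by linarith [hqq1]) hε.le
          have e3 : (q₁ - q₂) * ε ≤ 3 * c * (q₂ - q₃) * ε :=
            mul_le_mul_of_nonneg_right K12 hε.le
          linarith [e1, e2, e3]
        have hdiv : (q - q₂) * (Rev p₂ - Rev p₃) / (q₂ - q₃) ≤ 3 * c * ε := by
          rw [div_le_iff₀ (by linarith)]; linarith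
        linarith [hub2]
      · rcases le_or_gt p p₃ with hpc2 | hpc2
        · -- p ∈ [p₂, p₃], q ∈ [q₃, q₂]
          have hqq2 : q ≤ q₂ := by
            have := hFmono hm2 hmp hpc; simp only [hq2def, hqdef]; linarith
          have hqq3 : q₃ ≤ q := by
            have := hFmono.monotoneOn hmp hm3 hpc2; simp only [hq3def, hqdef]; linarith
          have hext := concave_ext_left hconc hqmp hqm1 hq12 hqq2
          rw [hgp, hg2, hg1] at hext
          have hnum : (q₂ - q) * (Rev p₂ - Rev p₁) ≤ 3 * c * ε * (q₁ - q₂) := by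
            have e1 : (q₂ - q) * (Rev p₂ - Rev p₁) ≤ (q₂ - q) * ε :=
              mul_le_mul_of_nonneg_left (by linarith [hub2, hlb1]) (by linarith)
            have e2 : (q₂ - q) * ε ≤ (q₂ - q₃) * ε :=
              mul_le_mul_of_nonneg_right (by linarith [hqq3]) hε.le
            have e3 : (q₂ - q₃) * ε ≤ 3 * c * (q₁ - q₂) * ε :=
              mul_le_mul_of_nonneg_right K23 hε.le
            linarith [e1, e2, e3]
          have hdiv : (q₂ - q) * (Rev p₂ - Rev p₁) / (q₁ - q₂) ≤ 3 * c * ε := by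
            rw [div_le_iff₀ (by linarith)]; linarith
          linarith [hub2]
        · -- p ∈ [p₃, p₄], q ∈ [q₄, q₃]
          have hqq3 : q ≤ q₃ := by
            have := hFmono hm3 hmp hpc2; simp only [hq3def, hqdef]; linarith
          have hext := concave_ext_left hconc hqmp hqm2 hq23 hqq3
          rw [hgp, hg3, hg2] at hext
          have hnum : (q₃ - q) * (Rev p₃ - Rev p₂) ≤ 3 * c * ε * (q₂ - q₃) := by
            have e1 : (q₃ - q) * (Rev p₃ - Rev p₂) ≤ (q₃ - q) * ε :=
              mul_le_mul_of_nonneg_left (by linarith [hub3, hlb2]) (by linarith)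
            have e2 : (q₃ - q) * ε ≤ (q₃ - q₄) * ε :=
              mul_le_mul_of_nonneg_right (by linarith [hqq4]) hε.le
            have e3 : (q₃ - q₄) * ε ≤ 3 * c * (q₂ - q₃) * ε :=
              mul_le_mul_of_nonneg_right K34 hε.le
            linarith [e1, e2, e3]
          have hdiv : (q₃ - q) * (Rev p₃ - Rev p₂) / (q₂ - q₃) ≤ 3 * c * ε := by
            rw [div_le_iff₀ (by linarith)]; linarith
          linarith [hub3]
    linarith [key, hcε]
  · -- large ε case
    push_neg at hcase
    have hMc : Rmax * (c - 1) < 6 * c * ε := by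
      have h3 : d = p₁ * (c - 1) / 3 := by rw [hddef, hp4c]; ring
      rw [h3] at hcase
      have h5 : 2 * ε * p₃ ≤ 2 * ε * (c * p₁) := by
        refine mul_le_mul_of_nonneg_left ?_ (by linarith)
        rw [← hp4c]; exact hp34.le
      have h6 : Rmax * (c - 1) * p₁ < 6 * c * ε * p₁ := by linarith [hcase, h5]
      exact lt_of_mul_lt_mul_right h6 hp₁.le
    linarith [hRevub, hMc]
end

section
/- Let 0 < ε < √2/2 and let q, q' ∈ (0,1) satisfy q'/(1+ε) ≤ q ≤ (1+ε)·q' and (1−q')/(1+ε) ≤ 1−q ≤ (1+ε)·(1−q'). Then the Kullback–Leibler divergence between the Bernoulli distributions with parameters q and q' satisfies q·log(q/q') + (1−q)·log((1−q)/(1−q')) < ε². -/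
/-- KL divergence bound for close Bernoulli parameters: if `q` and `q'` are in `(0,1)` and
are multiplicatively close (both `q` vs `q'` and `1−q` vs `1−q'` within a factor `1+ε`),
with `0 < ε < √2/2`, then `D_KL(Bern(q) ‖ Bern(q')) < ε²`. -/
theorem kl_bernoulli_lt_sq (ε q q' : ℝ)
    (hε : 0 < ε) (hε' : ε < Real.sqrt 2 / 2)
    (hq : q ∈ Set.Ioo (0:ℝ) 1) (hq' : q' ∈ Set.Ioo (0:ℝ) 1)
    (h1 : q' / (1 + ε) ≤ q) (h2 : q ≤ (1 + ε) * q')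
    (h3 : (1 - q') / (1 + ε) ≤ 1 - q) (h4 : 1 - q ≤ (1 + ε) * (1 - q')) :
    q * Real.log (q / q') + (1 - q) * Real.log ((1 - q) / (1 - q')) < ε ^ 2 := by
  obtain ⟨hq0, hq1⟩ := hq
  obtain ⟨hq'0, hq'1⟩ := hq'
  have hq'1' : 0 < 1 - q' := by linarith
  have hq1' : 0 < 1 - q := by linarith
  have hεp : (0:ℝ) < 1 + ε := by linarith
  have h1' : q' ≤ (1 + ε) * q := by
    rw [div_le_iff₀ hεp] at h1; linarith [h1]
  have h3' : 1 - q' ≤ (1 + ε) * (1 - q) := by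
    rw [div_le_iff₀ hεp] at h3; linarith [h3]
  have hd1 : |q - q'| ≤ ε * q' := by
    rw [abs_le]
    constructor
    · rcases le_or_gt q q' with h | h
      · nlinarith
      · nlinarith
    · nlinarith
  have hd2 : |q - q'| ≤ ε * (1 - q') := by
    rw [abs_le]
    constructor
    · nlinarith
    · rcases le_or_gt q' q with h | h
      · nlinarith
      · nlinarith
  have b1 : (q - q') ^ 2 / q' ≤ ε ^ 2 * q' := by
    rw [div_le_iff₀ hq'0]
    nlinarith [sq_abs (q - q'), abs_nonneg (q - q'), mul_pos hε hq'0]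
  have b2 : (q - q') ^ 2 / (1 - q') ≤ ε ^ 2 * (1 - q') := by
    rw [div_le_iff₀ hq'1']
    nlinarith [sq_abs (q - q'), abs_nonneg (q - q'), mul_pos hε hq'1']
  have e1 : q ^ 2 / q' = q' + 2 * (q - q') + (q - q') ^ 2 / q' := by
    field_simp; ring
  have e2 : (1 - q) ^ 2 / (1 - q') = (1 - q') - 2 * (q - q') + (q - q') ^ 2 / (1 - q') := by
    field_simp; ring
  have key : q ^ 2 / q' + (1 - q) ^ 2 / (1 - q') - 1 ≤ ε ^ 2 := by
    rw [e1, e2]; linarith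
  by_cases hqq : q = q'
  · subst hqq
    rw [div_self (ne_of_gt hq0), div_self (ne_of_gt hq1'), Real.log_one]
    simp
    positivity
  · have ha : q / q' ≠ 1 := by
      intro h
      apply hqq
      field_simp at h
      exact h
    have hb : (1 - q) / (1 - q') ≠ 1 := by
      intro h
      apply hqq
      rw [div_eq_one_iff_eq (ne_of_gt hq'1')] at h
      linarith
    have la := Real.log_lt_sub_one_of_pos (div_pos hq0 hq'0) ha
    have lb := Real.log_lt_sub_one_of_pos (div_pos hq1' hq'1') hb
    have hlt : q * Real.log (q / q') + (1 - q) * Real.log ((1 - q) / (1 - q')) <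
        q * (q / q' - 1) + (1 - q) * ((1 - q) / (1 - q') - 1) :=
      add_lt_add (mul_lt_mul_of_pos_left la hq0) (mul_lt_mul_of_pos_left lb hq1')
    have e : q * (q / q' - 1) + (1 - q) * ((1 - q) / (1 - q') - 1)
        = q ^ 2 / q' + (1 - q) ^ 2 / (1 - q') - 1 := by
      field_simp; ring
    linarith
end

section
/- Fix ε with 0 < ε ≤ 1/400 and set ε₀ = 16ε. With Q_D and Q_{D'} the explicit quantile functions defined in the context, there is no price p ∈ [0,1] that is simultaneously ε-optimal for both distributions; that is, there is no p ∈ [0,1] satisfying both p·Q_D(p) ≥ (0.4 + 0.4·ε₀ + 0.8·ε₀^{3/2}) − ε and p·Q_{D'}(p) ≥ 0.4 − ε. -/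
/-- Quantile function of the perturbed distribution `D` (with `ε₀ = 16ε`). -/
noncomputable def QD (ε₀ : ℝ) (v : ℝ) : ℝ :=
  if v < 1 / 2 then 1 - 0.4 * v
  else if v < 1 / 2 + Real.sqrt ε₀ / 2 then 0.8 - (1.6 - 3.2 * Real.sqrt ε₀) * (v - 1 / 2)
  else (1.6 + 3.2 * ε₀ / (1 - Real.sqrt ε₀)) * (1 - v)

/-- Quantile function of the two-piece uniform distribution `D'`. -/
noncomputable def QD' (v : ℝ) : ℝ :=
  if v < 1 / 2 then 1 - 0.4 * v else 1.6 * (1 - v)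

set_option maxHeartbeats 1000000 in
/-- No price is simultaneously `ε`-optimal for both `D` and `D'`: there is no
`p ∈ [0,1]` with `p·Q_D(p) ≥ (0.4 + 0.4ε₀ + 0.8ε₀^{3/2}) − ε` and
`p·Q_{D'}(p) ≥ 0.4 − ε`. -/
theorem no_common_eps_optimal_price (ε : ℝ) (hε : 0 < ε) (hε' : ε ≤ 1 / 400) :
    ¬ ∃ p ∈ Set.Icc (0:ℝ) 1,
        p * QD (16 * ε) p ≥ (0.4 + 0.4 * (16 * ε) + 0.8 * (16 * ε) ^ ((3:ℝ)/2)) - ε ∧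
        p * QD' p ≥ 0.4 - ε := by
  rintro ⟨p, ⟨hp0, hp1⟩, hD, hD'⟩
  set s := Real.sqrt ε with hs
  have hs0 : 0 < s := Real.sqrt_pos.mpr hε
  have hs2 : s ^ 2 = ε := Real.sq_sqrt hε.le
  have hsle : s ≤ 1 / 20 := by
    have : s ^ 2 ≤ (1 / 20 : ℝ) ^ 2 := by rw [hs2]; norm_num; linarith
    nlinarith
  have h4s : Real.sqrt (16 * ε) = 4 * s := by
    rw [show (16 : ℝ) * ε = (4 * s) ^ 2 by nlinarith]
    exact Real.sqrt_sq (by positivity)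
  have hr : (16 * ε) ^ ((3 : ℝ) / 2) = 64 * ε * s := by
    rw [show (3 : ℝ) / 2 = 1 + 1 / 2 by norm_num,
      Real.rpow_add (by positivity), Real.rpow_one, ← Real.sqrt_eq_rpow, h4s]
    ring
  rw [hr] at hD
  by_cases hp : p < 1 / 2
  · rw [QD, if_pos hp] at hD
    nlinarith [mul_nonneg (by linarith : (0:ℝ) ≤ 1 / 2 - p) (by linarith : (0:ℝ) ≤ 2 - p),
      mul_pos hε hs0]
  · push_neg at hp
    rw [QD', if_neg (not_lt.mpr hp)] at hD'
    -- from D' near-optimality: (p - 1/2)^2 ≤ 0.625 ε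
    have ht : (p - 1 / 2) ^ 2 ≤ 0.625 * ε := by nlinarith
    have ht0 : 0 ≤ p - 1 / 2 := by linarith
    have htlt : p < 1 / 2 + Real.sqrt (16 * ε) / 2 := by
      rw [h4s]
      nlinarith
    rw [QD, if_neg (not_lt.mpr hp), if_pos htlt, h4s] at hD
    -- t ≤ 0.84375 s
    have htle : p - 1 / 2 ≤ 0.84375 * s := by nlinarith
    have hexp : p * (0.8 - (1.6 - 3.2 * (4 * s)) * (p - 1 / 2)) =
        0.4 + 6.4 * (s * (p - 1 / 2)) - (1.6 - 12.8 * s) * (p - 1 / 2) ^ 2 := by ring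
    rw [hexp, ← hs2] at hD
    have h1 : s * (p - 1 / 2) ≤ 0.84375 * s ^ 2 := by nlinarith [mul_le_mul_of_nonneg_left htle hs0.le]
    have h2 : (0:ℝ) ≤ (1.6 - 12.8 * s) * (p - 1 / 2) ^ 2 :=
      mul_nonneg (by linarith) (sq_nonneg _)
    have h3 : (0:ℝ) < s ^ 2 * s := by positivity
    nlinarith [hD, h1, h2, h3]
end

section
/- Fix ε with 0 < ε ≤ 1/400 and set ε₀ = 16ε. With Q_D the explicit quantile function defined in the context, the monopoly price of D is p* = 1/2 + √ε₀/2: the function p ↦ p·Q_D(p) attains its maximum over [0,1] at p*, and the optimal revenue equals p*·Q_D(p*) = 0.4 + 0.4·ε₀ + 0.8·ε₀^{3/2}. -/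
/-- The monopoly price of `D` is `p* = 1/2 + √ε₀/2`: the revenue `p·Q_D(p)` is maximized
over `[0,1]` at `p*`, with optimal revenue `0.4 + 0.4ε₀ + 0.8ε₀^{3/2}`. -/
theorem monopoly_price_of_D (ε : ℝ) (hε : 0 < ε) (hε' : ε ≤ 1 / 400) :
    (∀ p ∈ Set.Icc (0:ℝ) 1,
        p * QD (16 * ε) p ≤
          (1 / 2 + Real.sqrt (16 * ε) / 2) * QD (16 * ε) (1 / 2 + Real.sqrt (16 * ε) / 2)) ∧
    (1 / 2 + Real.sqrt (16 * ε) / 2) * QD (16 * ε) (1 / 2 + Real.sqrt (16 * ε) / 2) =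
      0.4 + 0.4 * (16 * ε) + 0.8 * (16 * ε) ^ ((3:ℝ)/2) := by
  have hε0 : (0:ℝ) < 16 * ε := by linarith
  set s := Real.sqrt (16 * ε) with hs
  have hspos : 0 < s := Real.sqrt_pos.mpr hε0
  have hs2 : s ^ 2 = 16 * ε := Real.sq_sqrt hε0.le
  have hsle : s ≤ 1 / 5 := by nlinarith [hs2, hspos.le]
  have h1s : (0:ℝ) < 1 - s := by linarith
  have hp1 : ¬ ((1/2 + s/2 : ℝ) < 1/2) := by linarith
  have hp2 : ¬ ((1/2 + s/2 : ℝ) < 1/2 + s/2) := lt_irrefl _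
  have hV : (1/2 + s/2) * QD (16 * ε) (1/2 + s/2) = 0.4 + 0.4 * s^2 + 0.8 * s^3 := by
    rw [QD, ← hs, if_neg hp1, if_neg hp2, ← hs2]
    field_simp
    ring
  constructor
  · intro p hp
    obtain ⟨hp0, hp1'⟩ := hp
    rw [hV, QD, ← hs, ← hs2]
    split_ifs with h1 h2
    · nlinarith [mul_nonneg (by linarith : (0:ℝ) ≤ 1/2 - p) (by linarith : (0:ℝ) ≤ 2 - p),
        pow_pos hspos 3, sq_nonneg s]
    · push_neg at h1
      nlinarith [mul_nonneg (by linarith : (0:ℝ) ≤ 1/2 + s/2 - p)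
          (by nlinarith : (0:ℝ) ≤ 3.2 * s^2 + (1.6 - 3.2*s) * (1 + s - (p + (1/2 + s/2)))),
        hspos.le, sq_nonneg s]
    · push_neg at h1 h2
      have key : p * (1 - p) ≤ (1/2 + s/2) * (1 - (1/2 + s/2)) := by nlinarith
      have hcpos : (0:ℝ) ≤ 1.6 + 3.2 * s^2 / (1 - s) := by
        have := div_nonneg (by positivity : (0:ℝ) ≤ 3.2 * s^2) h1s.le
        linarith
      have hV' : (1.6 + 3.2 * s^2 / (1 - s)) * ((1/2 + s/2) * (1 - (1/2 + s/2)))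
          = 0.4 + 0.4 * s^2 + 0.8 * s^3 := by
        field_simp
        ring
      calc p * ((1.6 + 3.2 * s^2 / (1 - s)) * (1 - p))
          = (1.6 + 3.2 * s^2 / (1 - s)) * (p * (1 - p)) := by ring
        _ ≤ (1.6 + 3.2 * s^2 / (1 - s)) * ((1/2 + s/2) * (1 - (1/2 + s/2))) :=
            mul_le_mul_of_nonneg_left key hcpos
        _ = 0.4 + 0.4 * s^2 + 0.8 * s^3 := hV'
  · rw [hV]
    have hcube : (16 * ε) ^ ((3:ℝ)/2) = s ^ 3 := by
      rw [hs, Real.sqrt_eq_rpow, ← Real.rpow_natCast ((16*ε) ^ ((1:ℝ)/2)) 3,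
        ← Real.rpow_mul hε0.le]
      norm_num
    rw [hcube, hs2]
end

section
/- Fix ε with 0 < ε ≤ 1/400 and set ε₀ = 16ε. With Q_D the explicit quantile function defined in the context, for every p ∈ [0, 1/2 + √ε] one has p·Q_D(p) ≤ 0.4 + 4.8·ε + 12.8·ε^{3/2}; in particular, since the optimal revenue of D is 0.4 + 6.4·ε + 51.2·ε^{3/2}, every such p satisfies p·Q_D(p) < (0.4 + 6.4·ε + 51.2·ε^{3/2}) − ε. -/
/-- Every price `p ≤ 1/2 + √ε` earns revenue at most `0.4 + 4.8ε + 12.8ε^{3/2}` against `D`;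
in particular its revenue is more than `ε` below the optimal revenue
`0.4 + 6.4ε + 51.2ε^{3/2}` of `D`. -/
theorem low_prices_suboptimal_for_D (ε : ℝ) (hε : 0 < ε) (hε' : ε ≤ 1 / 400) :
    ∀ p ∈ Set.Icc (0:ℝ) (1 / 2 + Real.sqrt ε),
      p * QD (16 * ε) p ≤ 0.4 + 4.8 * ε + 12.8 * ε ^ ((3:ℝ)/2) ∧
      p * QD (16 * ε) p < (0.4 + 6.4 * ε + 51.2 * ε ^ ((3:ℝ)/2)) - ε := by
  intro p hp
  obtain ⟨hp0, hp1⟩ := hp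
  set s := Real.sqrt ε with hs
  have hs0 : 0 < s := Real.sqrt_pos.mpr hε
  have hs2 : s ^ 2 = ε := Real.sq_sqrt hε.le
  have hs20 : s ≤ 1 / 20 := by
    have := Real.sqrt_le_sqrt hε'
    have h400 : Real.sqrt (1/400) = 1/20 := by
      rw [show (1/400 : ℝ) = (1/20)^2 by norm_num, Real.sqrt_sq (by norm_num)]
    rw [hs]; linarith [this, h400.le, h400.ge]
  have hsqrt16 : Real.sqrt (16 * ε) = 4 * s := by
    rw [Real.sqrt_mul (by norm_num : (0:ℝ) ≤ 16), show (16:ℝ) = 4^2 by norm_num,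
      Real.sqrt_sq (by norm_num)]
  have hrpow : ε ^ ((3:ℝ)/2) = ε * s := by
    rw [show (3:ℝ)/2 = 1 + 1/2 by norm_num, Real.rpow_add hε, Real.rpow_one, hs,
      Real.sqrt_eq_rpow]
  rw [hrpow]
  have key : p * QD (16 * ε) p ≤ 0.4 + 4.8 * ε + 12.8 * (ε * s) := by
    unfold QD
    rw [hsqrt16]
    by_cases h1 : p < 1 / 2
    · rw [if_pos h1]
      nlinarith [mul_nonneg (mul_nonneg hε.le hs0.le) hs0.le, mul_pos hε hs0,
        mul_nonneg (sub_nonneg.mpr h1.le) (by linarith : (0:ℝ) ≤ 2 - p)]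
    · rw [if_neg h1, if_pos (by push_neg at h1; linarith)]
      push_neg at h1
      -- t = p - 1/2 ∈ [0, s]
      nlinarith [mul_nonneg (sub_nonneg.mpr h1) (sub_nonneg.mpr hp1),
        mul_nonneg (mul_nonneg (sub_nonneg.mpr h1) (sub_nonneg.mpr hp1)) hs0.le,
        sq_nonneg (p - 1/2 - s), mul_nonneg hs0.le (sub_nonneg.mpr hp1),
        mul_nonneg (mul_nonneg hs0.le (sub_nonneg.mpr hp1)) hs0.le]
  refine ⟨key, lt_of_le_of_lt key ?_⟩
  nlinarith [mul_pos hε hs0]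
end

section
/- Fix ε with 0 < ε ≤ 1/400 and set ε₀ = 16ε. With Q_D and Q_{D'} the explicit quantile functions defined in the context, for every v ∈ [0,1]: (i) Q_{D'}(v) ≤ Q_D(v) ≤ (1 + 2·ε₀/(1 − √ε₀))·Q_{D'}(v), and (ii) the cdfs F_D = 1 − Q_D and F_{D'} = 1 − Q_{D'} satisfy (1 − 1.6·ε₀/(0.2 + 0.8·√ε₀))·F_{D'}(v) ≤ F_D(v) ≤ F_{D'}(v). -/
set_option maxHeartbeats 1000000


/-- The quantiles and cdfs of `D` and `D'` are multiplicatively close: for all `v ∈ [0,1]`,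
`Q_{D'}(v) ≤ Q_D(v) ≤ (1 + 2ε₀/(1−√ε₀))·Q_{D'}(v)` and
`(1 − 1.6ε₀/(0.2 + 0.8√ε₀))·F_{D'}(v) ≤ F_D(v) ≤ F_{D'}(v)`, where `F = 1 − Q`. -/
theorem quantiles_of_D_D'_close (ε : ℝ) (hε : 0 < ε) (hε' : ε ≤ 1 / 400) :
    ∀ v ∈ Set.Icc (0:ℝ) 1,
      QD' v ≤ QD (16 * ε) v ∧
      QD (16 * ε) v ≤ (1 + 2 * (16 * ε) / (1 - Real.sqrt (16 * ε))) * QD' v ∧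
      (1 - 1.6 * (16 * ε) / (0.2 + 0.8 * Real.sqrt (16 * ε))) * (1 - QD' v) ≤
        1 - QD (16 * ε) v ∧
      1 - QD (16 * ε) v ≤ 1 - QD' v := by
  intro v hv
  obtain ⟨hv0, hv1⟩ := hv
  have hε16 : (0:ℝ) < 16 * ε := by linarith
  set s := Real.sqrt (16 * ε) with hsdef
  have hs0 : 0 < s := Real.sqrt_pos.mpr hε16
  have hs2 : s ^ 2 = 16 * ε := Real.sq_sqrt hε16.le
  have hs5 : s ≤ 1 / 5 := by nlinarith
  have h1s : (0:ℝ) < 1 - s := by linarith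
  have hd2 : (0:ℝ) < 0.2 + 0.8 * s := by linarith
  have ha : 3.2 * (16 * ε) / (1 - s) * (1 - s) = 3.2 * (16 * ε) :=
    div_mul_cancel₀ _ (ne_of_gt h1s)
  have hb : 2 * (16 * ε) / (1 - s) * (1 - s) = 2 * (16 * ε) :=
    div_mul_cancel₀ _ (ne_of_gt h1s)
  have hc : 1.6 * (16 * ε) / (0.2 + 0.8 * s) * (0.2 + 0.8 * s) = 1.6 * (16 * ε) :=
    div_mul_cancel₀ _ (ne_of_gt hd2)
  have hbpos : 0 ≤ 2 * (16 * ε) / (1 - s) := by positivity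
  have hapos : 0 ≤ 3.2 * (16 * ε) / (1 - s) := by positivity
  have hcpos : 0 ≤ 1.6 * (16 * ε) / (0.2 + 0.8 * s) := by positivity
  unfold QD QD'
  split_ifs with h1 h2
  · refine ⟨le_refl _, ?_, ?_, le_refl _⟩
    · nlinarith
    · nlinarith
  · -- 1/2 ≤ v < 1/2 + s/2
    push_neg at h1
    refine ⟨?_, ?_, ?_, ?_⟩
    · nlinarith
    · nlinarith
    · nlinarith
    · nlinarith
  · -- v ≥ 1/2 + s/2
    push_neg at h1 h2
    have hx : 0 ≤ 1.6 * (16 * ε) / (0.2 + 0.8 * s) * ((1.6 * v - 0.6) - (0.2 + 0.8 * s)) :=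
      mul_nonneg hcpos (by linarith)
    have hy : 0 ≤ 3.2 * (16 * ε) / (1 - s) * ((1 - s) / 2 - (1 - v)) :=
      mul_nonneg hapos (by linarith)
    have hz : 0 ≤ 3.2 * (16 * ε) / (1 - s) * (1 - v) :=
      mul_nonneg hapos (by linarith)
    have hAB : 3.2 * (16 * ε) / (1 - s) = 1.6 * (2 * (16 * ε) / (1 - s)) := by ring
    refine ⟨by nlinarith [hz], ?_, by nlinarith [ha, hc, hx, hy], by nlinarith [hz]⟩
    rw [hAB]
    nlinarith [mul_nonneg hbpos (show (0:ℝ) ≤ 1 - v by linarith)]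
end

section
/- Fix ε with 0 < ε ≤ 1/400 and set ε₀ = 16ε. Define the density f_D : [0,1) → ℝ by f_D(v) = 0.4 for v ∈ [0, 1/2); f_D(v) = 1.6 − 3.2·√ε₀ for v ∈ [1/2, 1/2 + √ε₀/2); and f_D(v) = 1.6 + 3.2·ε₀/(1 − √ε₀) for v ∈ [1/2 + √ε₀/2, 1), and let Q_D be the corresponding quantile function as defined in the context. Then the distribution D has monotone hazard rate: the hazard rate h(v) = f_D(v)/Q_D(v) is nondecreasing on [0,1). -/
/-- Density of the distribution `D` (with `ε₀ = 16ε`). -/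
noncomputable def fD (ε₀ : ℝ) (v : ℝ) : ℝ :=
  if v < 1 / 2 then 0.4
  else if v < 1 / 2 + Real.sqrt ε₀ / 2 then 1.6 - 3.2 * Real.sqrt ε₀
  else 1.6 + 3.2 * ε₀ / (1 - Real.sqrt ε₀)

set_option maxHeartbeats 1600000 in
/-- The distribution `D` has monotone hazard rate: `v ↦ f_D(v)/Q_D(v)` is
nondecreasing on `[0,1)`. -/
theorem D_is_MHR (ε : ℝ) (hε : 0 < ε) (hε' : ε ≤ 1 / 400) :
    MonotoneOn (fun v => fD (16 * ε) v / QD (16 * ε) v) (Set.Ico (0:ℝ) 1) := by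
  intro x hx y hy hxy
  obtain ⟨hx0, hx1⟩ := hx
  obtain ⟨hy0, hy1⟩ := hy
  have h16 : (0:ℝ) ≤ 16 * ε := by linarith
  have hs2 : (Real.sqrt (16 * ε)) ^ 2 = 16 * ε := Real.sq_sqrt h16
  set s := Real.sqrt (16 * ε) with hs
  have hspos : 0 < s := Real.sqrt_pos.mpr (by linarith)
  have hsle : s ≤ 1 / 5 := by nlinarith [hs2, hspos]
  have h1s : (0:ℝ) < 1 - s := by linarith
  have hf2 : (0:ℝ) ≤ 1.6 - 3.2 * s := by linarith
  have hcpos : 0 < 1.6 + 3.2 * (16 * ε) / (1 - s) := by positivity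
  simp only [fD, QD]
  rw [show Real.sqrt (16 * ε) = s from rfl]
  split_ifs with h1 h2 h3 h4 h5 h6 h7 h8 h9 <;>
    try (exfalso; linarith)
  -- case: x < 1/2, y < 1/2
  · have hqx : (0:ℝ) < 1 - 0.4 * x := by linarith
    have hqy : (0:ℝ) < 1 - 0.4 * y := by linarith
    rw [div_le_div_iff₀ hqx hqy]
    nlinarith
  -- case: x < 1/2, y in middle
  · have hy2 : y - 1 / 2 ≤ s / 2 := by linarith
    have hint : (1.6 - 3.2 * s) * (y - 1 / 2) ≤ (1.6 - 3.2 * s) * (s / 2) :=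
      mul_le_mul_of_nonneg_left hy2 hf2
    have hqx : (0:ℝ) < 1 - 0.4 * x := by linarith
    have hqy : (0:ℝ) < 0.8 - (1.6 - 3.2 * s) * (y - 1 / 2) := by nlinarith [sq_nonneg s]
    rw [div_le_div_iff₀ hqx hqy]
    have hint2 : (0:ℝ) ≤ (1.6 - 3.2 * s) * (y - 1 / 2) :=
      mul_nonneg hf2 (by linarith)
    nlinarith [hint2]
  -- case: x < 1/2, y in last piece
  · have hqx : (0:ℝ) < 1 - 0.4 * x := by linarith
    have hqy : (0:ℝ) < (1.6 + 3.2 * (16 * ε) / (1 - s)) * (1 - y) :=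
      mul_pos hcpos (by linarith)
    rw [div_le_div_iff₀ hqx hqy]
    have key : 0.4 * (1 - y) ≤ 1 - 0.4 * x := by linarith
    have hint := mul_le_mul_of_nonneg_left key hcpos.le
    linarith [hint]
  -- case: x in middle, y in middle
  · have hintx : (1.6 - 3.2 * s) * (x - 1 / 2) ≤ (1.6 - 3.2 * s) * (s / 2) :=
      mul_le_mul_of_nonneg_left (by linarith) hf2
    have hinty : (1.6 - 3.2 * s) * (y - 1 / 2) ≤ (1.6 - 3.2 * s) * (s / 2) :=
      mul_le_mul_of_nonneg_left (by linarith) hf2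
    have hqx : (0:ℝ) < 0.8 - (1.6 - 3.2 * s) * (x - 1 / 2) := by nlinarith [sq_nonneg s]
    have hqy : (0:ℝ) < 0.8 - (1.6 - 3.2 * s) * (y - 1 / 2) := by nlinarith [sq_nonneg s]
    rw [div_le_div_iff₀ hqx hqy]
    have hmono : (1.6 - 3.2 * s) * (x - 1 / 2) ≤ (1.6 - 3.2 * s) * (y - 1 / 2) :=
      mul_le_mul_of_nonneg_left (by linarith) hf2
    have hqle : 0.8 - (1.6 - 3.2 * s) * (y - 1 / 2) ≤ 0.8 - (1.6 - 3.2 * s) * (x - 1 / 2) := by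
      linarith
    have := mul_le_mul_of_nonneg_left hqle hf2
    linarith [this]
  -- case: x in middle, y in last piece
  · have hintx : (1.6 - 3.2 * s) * (x - 1 / 2) ≤ (1.6 - 3.2 * s) * (s / 2) :=
      mul_le_mul_of_nonneg_left (by linarith) hf2
    have hqx : (0:ℝ) < 0.8 - (1.6 - 3.2 * s) * (x - 1 / 2) := by nlinarith [sq_nonneg s]
    have hqy : (0:ℝ) < (1.6 + 3.2 * (16 * ε) / (1 - s)) * (1 - y) :=
      mul_pos hcpos (by linarith)
    rw [div_le_div_iff₀ hqx hqy]
    have hinty : (1.6 - 3.2 * s) * (1 - y) ≤ (1.6 - 3.2 * s) * (1 / 2 - s / 2) :=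
      mul_le_mul_of_nonneg_left (by linarith) hf2
    have key : (1.6 - 3.2 * s) * (1 - y) ≤ 0.8 - (1.6 - 3.2 * s) * (x - 1 / 2) := by
      nlinarith [hintx, hinty]
    have hint := mul_le_mul_of_nonneg_left key hcpos.le
    nlinarith [hint]
  -- case: both in last piece
  · have hqx : (0:ℝ) < (1.6 + 3.2 * (16 * ε) / (1 - s)) * (1 - x) :=
      mul_pos hcpos (by linarith)
    have hqy : (0:ℝ) < (1.6 + 3.2 * (16 * ε) / (1 - s)) * (1 - y) :=
      mul_pos hcpos (by linarith)
    rw [div_le_div_iff₀ hqx hqy]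
    have hle : (1.6 + 3.2 * (16 * ε) / (1 - s)) * (1 - y)
        ≤ (1.6 + 3.2 * (16 * ε) / (1 - s)) * (1 - x) :=
      mul_le_mul_of_nonneg_left (by linarith) hcpos.le
    have hint := mul_le_mul_of_nonneg_left hle hcpos.le
    linarith [hint]
end

section
/- Let F, G : ℝ → [0,1] be nondecreasing functions (cdfs) and let ε > 0. Suppose F(v) ≤ G(v + ε) + ε for all v ∈ ℝ (one half of the condition that F and G are within Levy distance ε). Then for every p ∈ [ε, 1]: (p − ε)·(1 − F(p − ε)) ≥ p·(1 − G(p)) − 2ε. In particular, if two distributions on [0,1] are within Levy distance ε and p is the monopoly price of the second, then posting p − ε against the first loses at most 2ε revenue relative to the optimal revenue of the second. -/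
/-- If cdfs `F, G : ℝ → [0,1]` satisfy one half of the Levy-distance-`ε` condition,
namely `F(v) ≤ G(v + ε) + ε` for all `v`, then for every `p ∈ [ε, 1]`,
`(p − ε)·(1 − F(p − ε)) ≥ p·(1 − G(p)) − 2ε`: posting `p − ε` against `F` loses at
most `2ε` revenue relative to posting `p` against `G`. -/
theorem levy_close_revenue (F G : ℝ → ℝ) (ε : ℝ) (hε : 0 < ε)
    (hFmono : Monotone F) (hGmono : Monotone G)
    (hFrange : ∀ v, F v ∈ Set.Icc (0:ℝ) 1)
    (hGrange : ∀ v, G v ∈ Set.Icc (0:ℝ) 1)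
    (hlevy : ∀ v : ℝ, F v ≤ G (v + ε) + ε) :
    ∀ p ∈ Set.Icc ε 1, (p - ε) * (1 - F (p - ε)) ≥ p * (1 - G p) - 2 * ε := by
  intro p hp
  obtain ⟨hp1, hp2⟩ := hp
  have h := hlevy (p - ε)
  rw [sub_add_cancel] at h
  have hF := hFrange (p - ε)
  have hG := hGrange p
  obtain ⟨hF0, hF1⟩ := hF
  obtain ⟨hG0, hG1⟩ := hG
  nlinarith [mul_nonneg (sub_nonneg.2 hp1) (sub_nonneg.2 hF1)]
end

section
/- For every ε > 0 and every q ∈ (0, 1/2]: q·log(1+ε) + (1−q)·log(1−q) − (1−q)·log(1 − q/(1+ε)) < ε². Equivalently, the KL divergence between a Bernoulli with parameter q and a Bernoulli with parameter q/(1+ε) is less than ε² whenever q ≤ 1/2. -/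
/-- KL divergence between `Bernoulli(q)` and `Bernoulli(q/(1+ε))` is less than `ε²`
whenever `0 < q ≤ 1/2` and `ε > 0`. -/
theorem kl_bernoulli_div_case (ε q : ℝ) (hε : 0 < ε) (hq : 0 < q) (hq' : q ≤ 1 / 2) :
    q * Real.log (1 + ε) + (1 - q) * Real.log (1 - q) -
      (1 - q) * Real.log (1 - q / (1 + ε)) < ε ^ 2 := by
  have hε1 : (0:ℝ) < 1 + ε := by linarith
  have hq1 : q < 1 := by linarith
  have ha : q / (1 + ε) < q := by
    rw [div_lt_iff₀ hε1]; nlinarith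
  have ha0 : 0 < q / (1 + ε) := div_pos hq hε1
  have h1a : 0 < 1 - q / (1 + ε) := by
    have : q / (1 + ε) < 1 := lt_trans ha hq1
    linarith
  have h1q : (0:ℝ) < 1 - q := by linarith
  have hden : (0:ℝ) < 1 + ε - q := by linarith
  have hlog1 : Real.log (1 + ε) < ε := by
    have h := Real.log_lt_sub_one_of_pos hε1 (by linarith : (1:ℝ) + ε ≠ 1)
    linarith
  have hlog2 : Real.log (1 - q) - Real.log (1 - q / (1 + ε)) ≤
      (1 - q) / (1 - q / (1 + ε)) - 1 := by
    rw [← Real.log_div (ne_of_gt h1q) (ne_of_gt h1a)]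
    exact Real.log_le_sub_one_of_pos (div_pos h1q h1a)
  have key : q * ε + (1 - q) * ((1 - q) / (1 - q / (1 + ε)) - 1) ≤ ε ^ 2 := by
    rw [← sub_nonneg]
    have h : ε ^ 2 - (q * ε + (1 - q) * ((1 - q) / (1 - q / (1 + ε)) - 1))
        = (ε ^ 2 * (1 + ε - q) - q * ε * (1 + ε - q) + (1 - q) * q * ε) / (1 + ε - q) := by
      field_simp
      ring
    rw [h]
    apply div_nonneg _ hden.le
    nlinarith
  have h2 : (1 - q) * (Real.log (1 - q) - Real.log (1 - q / (1 + ε))) ≤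
      (1 - q) * ((1 - q) / (1 - q / (1 + ε)) - 1) :=
    mul_le_mul_of_nonneg_left hlog2 h1q.le
  have h3 : q * Real.log (1 + ε) < q * ε := by
    exact mul_lt_mul_of_pos_left hlog1 hq
  nlinarith
end

section
/- For every ε with 0 < ε < √2/2 and every q ∈ (0, 1/2]: −q·log(1+ε) + (1−q)·log(1−q) − (1−q)·log(1 − (1+ε)·q) < ε². Equivalently, the KL divergence between a Bernoulli with parameter q and a Bernoulli with parameter (1+ε)·q is less than ε² whenever q ≤ 1/2 and ε < √2/2. -/
/-- KL divergence between `Bernoulli(q)` and `Bernoulli((1+ε)·q)` is less than `ε²`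
whenever `0 < q ≤ 1/2` and `0 < ε < √2/2`. -/
theorem kl_bernoulli_mul_case (ε q : ℝ) (hε : 0 < ε) (hε' : ε < Real.sqrt 2 / 2)
    (hq : 0 < q) (hq' : q ≤ 1 / 2) :
    -q * Real.log (1 + ε) + (1 - q) * Real.log (1 - q) -
      (1 - q) * Real.log (1 - (1 + ε) * q) < ε ^ 2 := by
  have hs2 : Real.sqrt 2 ^ 2 = 2 := Real.sq_sqrt (by norm_num)
  have hsnn : 0 ≤ Real.sqrt 2 := Real.sqrt_nonneg 2
  have hε2 : ε ^ 2 < 1 / 2 := by nlinarith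
  have hε1 : ε < 1 := by nlinarith
  set F : ℝ → ℝ := fun t => t ^ 2 + q * Real.log (1 + t)
      - (1 - q) * Real.log (1 - q) + (1 - q) * Real.log (1 - (1 + t) * q) with hF
  have hderiv : ∀ t ∈ Set.Icc (0:ℝ) ε,
      HasDerivAt F (2 * t + q * (1 / (1 + t)) + (1 - q) * (-(1 * q) / (1 - (1 + t) * q))) t := by
    intro t ht
    obtain ⟨ht0, htε⟩ := ht
    have ha : (0:ℝ) < 1 + t := by linarith
    have hb : 0 < 1 - (1 + t) * q := by nlinarith
    have h1 : HasDerivAt (fun t : ℝ => t ^ 2) (2 * t) t := by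
      simpa using hasDerivAt_pow 2 t
    have h2 : HasDerivAt (fun t : ℝ => q * Real.log (1 + t)) (q * (1 / (1 + t))) t := by
      exact (((hasDerivAt_id t).const_add 1).log ha.ne').const_mul q
    have h3 : HasDerivAt (fun t : ℝ => (1 - q) * Real.log (1 - (1 + t) * q))
        ((1 - q) * (-(1 * q) / (1 - (1 + t) * q))) t := by
      have hin : HasDerivAt (fun t : ℝ => 1 - (1 + t) * q) (-(1 * q)) t := by
        exact (((hasDerivAt_id t).const_add 1).mul_const q).const_sub 1
      exact (hin.log hb.ne').const_mul (1 - q)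
    exact ((h1.add h2).sub_const ((1 - q) * Real.log (1 - q))).add h3
  have hmono : StrictMonoOn F (Set.Icc 0 ε) := by
    apply strictMonoOn_of_deriv_pos (convex_Icc 0 ε)
    · exact fun t ht => (hderiv t ht).continuousAt.continuousWithinAt
    · intro t ht
      rw [interior_Icc] at ht
      obtain ⟨ht0, htε⟩ := ht
      rw [((hderiv t ⟨le_of_lt ht0, le_of_lt htε⟩).deriv)]
      have ha : (0:ℝ) < 1 + t := by linarith
      have hb : 0 < 1 - (1 + t) * q := by nlinarith
      have ht2 : t ^ 2 < 1 / 2 := by nlinarith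
      have key : 0 < 2 * (1 + t) * (1 - (1 + t) * q) - q := by
        nlinarith [mul_le_mul_of_nonneg_right hq'
          (show (0:ℝ) ≤ 2 * (1 + t) ^ 2 + 1 by positivity)]
      have heq : 2 * t + q * (1 / (1 + t)) + (1 - q) * (-(1 * q) / (1 - (1 + t) * q))
          = t * (2 * (1 + t) * (1 - (1 + t) * q) - q) / ((1 + t) * (1 - (1 + t) * q)) := by
        rw [eq_div_iff (by positivity)]
        have hb' := hb.ne'
        have ha' := ha.ne'
        calc _ = 2 * t * ((1 + t) * (1 - (1 + t) * q)) + q * (1 - (1 + t) * q) * ((1 + t) / (1 + t)) - (1 - q) * q * (1 + t) * ((1 - (1 + t) * q) / (1 - (1 + t) * q)) := by ring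
          _ = _ := by rw [div_self ha', div_self hb']; ring
      rw [heq]
      positivity
  have h0 : F 0 = 0 := by simp [hF]
  have := hmono (Set.left_mem_Icc.mpr hε.le) (Set.right_mem_Icc.mpr hε.le) hε
  rw [h0, hF] at this
  simp only at this
  linarith
end
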